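/- Let C_t be the cycle of order t ≥ 3 and let G be a connected graph of order r ≥ 2. For any vertex v of C_t, the strong metric dimension of the rooted product graph satisfies dim_s(G∘_v C_t) = r⌈t/2⌉ − 1. -/

import Mathlib

set_option maxHeartbeats 1000000


namespace RootedStrong

variable {V : Type*}

/-- `u` is maximally distant from `v`: every neighbor `w` of `u` satisfies `d(v,w) ≤ d(u,v)`. -/
def MaxDistant (G : SimpleGraph V) (u v : V) : Prop :=
  ∀ w, G.Adj u w → G.dist v w ≤ G.dist u v

/-- `u` and `v` are mutually maximally distant. -/
def MMD (G : SimpleGraph V) (u v : V) : Prop :=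
  MaxDistant G u v ∧ MaxDistant G v u

/-- The boundary `∂(G)` of a graph. -/
def boundary (G : SimpleGraph V) : Set V := {u | ∃ v, MMD G u v}

/-- A vertex is simplicial if its neighborhood induces a complete graph. -/
def Simplicial (G : SimpleGraph V) (u : V) : Prop :=
  ∀ x ∈ G.neighborSet u, ∀ y ∈ G.neighborSet u, x ≠ y → G.Adj x y

/-- The set `σ(G)` of simplicial vertices. -/
def simplicialSet (G : SimpleGraph V) : Set V := {u | Simplicial G u}

/-- `w` strongly resolves `u` and `v`. -/
def StronglyResolves (G : SimpleGraph V) (w u v : V) : Prop :=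
  G.dist w u = G.dist w v + G.dist v u ∨ G.dist w v = G.dist w u + G.dist u v

/-- A set of vertices is a strong metric generator if every pair of distinct vertices is
strongly resolved by some of its elements. -/
def IsStrongGenerator (G : SimpleGraph V) (S : Set V) : Prop :=
  ∀ u v : V, u ≠ v → ∃ w ∈ S, StronglyResolves G w u v

/-- The strong metric dimension of a graph. -/
noncomputable def sdim (G : SimpleGraph V) [Fintype V] : ℕ :=
  sInf {n | ∃ S : Finset V, S.card = n ∧ IsStrongGenerator G (S : Set V)}

/-- A strong metric basis: a strong metric generator of minimum cardinality. -/
def IsStrongBasis (G : SimpleGraph V) [Fintype V] (S : Finset V) : Prop :=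
  IsStrongGenerator G (S : Set V) ∧ S.card = sdim G

/-- The rooted product graph `G ∘_v H`. -/
def rootedProd {α β : Type*} (G : SimpleGraph α) (H : SimpleGraph β) (v : β) :
    SimpleGraph (α × β) where
  Adj p q := (p.1 = q.1 ∧ H.Adj p.2 q.2) ∨ (p.2 = v ∧ q.2 = v ∧ G.Adj p.1 q.1)
  symm := ⟨by
    rintro ⟨a, x⟩ ⟨b, y⟩ (⟨h1, h2⟩ | ⟨h1, h2, h3⟩)
    · exact Or.inl ⟨h1.symm, h2.symm⟩
    · exact Or.inr ⟨h2, h1, h3.symm⟩⟩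
  loopless := ⟨by
    rintro ⟨a, x⟩ (⟨_, h2⟩ | ⟨_, _, h3⟩)
    · exact H.irrefl h2
    · exact G.irrefl h3⟩

/-- Two distinct vertices are true twins if they have equal closed neighborhoods. -/
def TrueTwins (G : SimpleGraph V) (x y : V) : Prop :=
  x ≠ y ∧ ∀ z, (z = x ∨ G.Adj x z) ↔ (z = y ∨ G.Adj y z)

/-- A twin-free clique: a clique containing no pair of true twins. -/
def IsTwinFreeClique (G : SimpleGraph V) (X : Set V) : Prop :=
  (∀ x ∈ X, ∀ y ∈ X, x ≠ y → G.Adj x y) ∧ ∀ x ∈ X, ∀ y ∈ X, ¬ TrueTwins G x y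

/-- The twin-free clique number `ϖ(G)`. -/
noncomputable def twinFreeCliqueNum (G : SimpleGraph V) : ℕ :=
  sSup {n | ∃ X : Set V, IsTwinFreeClique G X ∧ X.ncard = n}


section Aux


open SimpleGraph

/-- nat-level cycle distance in `C_t` between positions `a b < t`. -/
def dCn (t a b : ℕ) : ℕ := min ((a - b) + (b - a)) (t - ((a - b) + (b - a)))

variable {t : ℕ}

lemma fin_sub_val (x y : Fin t) :
    (x - y).val = if y.val ≤ x.val then x.val - y.val else x.val + t - y.val := by
  have hx := x.isLt; have hy := y.isLt
  rw [Fin.sub_def]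
  dsimp only
  split_ifs with h
  · have h1 : x.val + (t - y.val) = (x.val - y.val) + t := by omega
    have h2 : t - y.val + x.val = (x.val - y.val) + t := by omega
    rw [h2, Nat.add_mod_right, Nat.mod_eq_of_lt (by omega)]
  · rw [Nat.mod_eq_of_lt (by omega)]
    omega

lemma cyc_adj_iff (h3 : 3 ≤ t) {x y : Fin t} :
    (cycleGraph t).Adj x y ↔
      (y.val = x.val + 1 ∨ x.val = y.val + 1 ∨ (x.val = 0 ∧ y.val = t - 1) ∨
        (y.val = 0 ∧ x.val = t - 1)) := by
  have hx := x.isLt; have hy := y.isLt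
  rw [SimpleGraph.cycleGraph_adj', fin_sub_val, fin_sub_val]
  split_ifs <;> omega

lemma dCn_lip (h3 : 3 ≤ t) {x y z : Fin t} (ha : (cycleGraph t).Adj x z) :
    dCn t x.val y.val ≤ dCn t z.val y.val + 1 := by
  have hx := x.isLt; have hy := y.isLt; have hz := z.isLt
  rw [cyc_adj_iff h3] at ha
  unfold dCn
  omega

lemma dCn_step {a b n : ℕ} (h3 : 3 ≤ t) (ha : a < t) (hb : b < t)
    (h : dCn t a b = n + 1) :
    dCn t (if a + 1 = t then 0 else a + 1) b = n ∨
    dCn t (if a = 0 then t - 1 else a - 1) b = n := by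
  unfold dCn at h ⊢
  rcases Nat.le_total a b with hab | hab <;>
    rcases le_or_gt (2 * ((a - b) + (b - a))) t with hs | hs <;>
      split_ifs <;> first | (left; omega) | (right; omega)

lemma exists_walk_dCn (h3 : 3 ≤ t) :
    ∀ n (x y : Fin t), dCn t x.val y.val = n →
      ∃ W : (cycleGraph t).Walk x y, W.length = n := by
  intro n
  induction n with
  | zero =>
    intro x y h
    have hx := x.isLt; have hy := y.isLt
    have : x = y := by
      apply Fin.ext
      unfold dCn at h; omega
    subst this
    exact ⟨Walk.nil, rfl⟩
  | succ n ih =>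
    intro x y h
    have hx := x.isLt; have hy := y.isLt
    rcases dCn_step h3 hx hy h with hd | hd
    · set c : ℕ := if x.val + 1 = t then 0 else x.val + 1 with hc
      have hclt : c < t := by rw [hc]; split_ifs <;> omega
      have hadj : (cycleGraph t).Adj x ⟨c, hclt⟩ := by
        rw [cyc_adj_iff h3]; dsimp; rw [hc]; split_ifs <;> omega
      obtain ⟨W, hW⟩ := ih ⟨c, hclt⟩ y hd
      exact ⟨Walk.cons hadj W, by simp [hW]⟩
    · set c : ℕ := if x.val = 0 then t - 1 else x.val - 1 with hc
      have hclt : c < t := by rw [hc]; split_ifs <;> omega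
      have hadj : (cycleGraph t).Adj x ⟨c, hclt⟩ := by
        rw [cyc_adj_iff h3]; dsimp; rw [hc]; split_ifs <;> omega
      obtain ⟨W, hW⟩ := ih ⟨c, hclt⟩ y hd
      exact ⟨Walk.cons hadj W, by simp [hW]⟩

lemma dCn_le_walk (h3 : 3 ≤ t) {x y : Fin t} (W : (cycleGraph t).Walk x y) :
    dCn t x.val y.val ≤ W.length := by
  induction W with
  | nil => unfold dCn; omega
  | cons ha p ih =>
    rw [SimpleGraph.Walk.length_cons]
    exact le_trans (dCn_lip h3 ha) (Nat.add_le_add_right ih 1)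

theorem cyc_dist (h3 : 3 ≤ t) (x y : Fin t) :
    (cycleGraph t).dist x y = dCn t x.val y.val := by
  obtain ⟨W, hW⟩ := exists_walk_dCn h3 _ x y rfl
  refine le_antisymm (le_trans (SimpleGraph.dist_le W) (le_of_eq hW)) ?_
  obtain ⟨P, hP⟩ := (Reachable.exists_walk_length_eq_dist ⟨W⟩)
  calc dCn t x.val y.val ≤ P.length := dCn_le_walk h3 P
  _ = _ := hP


end Aux


section Aux2

open SimpleGraph

variable {α : Type*} {t : ℕ}

/-- the root vertex `0` of the cycle. -/
def zeroF (h3 : 3 ≤ t) : Fin t := ⟨0, by omega⟩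

variable {G : SimpleGraph α}

/-- The embedding of a copy of the cycle into the rooted product, as a graph hom. -/
def copyHom (h3 : 3 ≤ t) (a : α) :
    cycleGraph t →g rootedProd G (cycleGraph t) (zeroF h3) where
  toFun x := (a, x)
  map_rel' h := Or.inl ⟨rfl, h⟩

/-- The embedding of `G` as roots into the rooted product, as a graph hom. -/
def rootHom (h3 : 3 ≤ t) :
    G →g rootedProd G (cycleGraph t) (zeroF h3) where
  toFun a := (a, zeroF h3)
  map_rel' h := Or.inr ⟨rfl, rfl, h⟩

lemma copyHom_apply (h3 : 3 ≤ t) (a : α) (x : Fin t) : copyHom (G := G) h3 a x = (a, x) := rfl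

lemma rootHom_apply (h3 : 3 ≤ t) (a : α) : rootHom (G := G) h3 a = (a, zeroF h3) := rfl

lemma proj2 (h3 : 3 ≤ t) {p q : α × Fin t}
    (W : (rootedProd G (cycleGraph t) (zeroF h3)).Walk p q) :
    ∃ W' : (cycleGraph t).Walk p.2 q.2, W'.length ≤ W.length := by
  induction W with
  | nil => exact ⟨Walk.nil, le_rfl⟩
  | @cons p m q h W ih =>
    obtain ⟨W', hW'⟩ := ih
    rcases id h with ⟨h1, h2⟩ | ⟨h1, h2, h3'⟩
    · exact ⟨Walk.cons h2 W', by simpa using Nat.add_le_add_right hW' 1⟩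
    · refine ⟨W'.copy (by rw [h2, h1]) rfl, ?_⟩
      simp only [Walk.length_copy, Walk.length_cons]
      omega

lemma proj1 (h3 : 3 ≤ t) {p q : α × Fin t}
    (W : (rootedProd G (cycleGraph t) (zeroF h3)).Walk p q) :
    ∃ W' : G.Walk p.1 q.1, W'.length ≤ W.length := by
  induction W with
  | nil => exact ⟨Walk.nil, le_rfl⟩
  | @cons p m q h W ih =>
    obtain ⟨W', hW'⟩ := ih
    rcases id h with ⟨h1, h2⟩ | ⟨h1, h2, h3'⟩
    · refine ⟨W'.copy (by rw [h1]) rfl, ?_⟩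
      simp only [Walk.length_copy, Walk.length_cons]
      omega
    · exact ⟨Walk.cons h3' W', by simpa using Nat.add_le_add_right hW' 1⟩

lemma rp_dist_same (h3 : 3 ≤ t) (a : α) (x y : Fin t) :
    (rootedProd G (cycleGraph t) (zeroF h3)).dist (a, x) (a, y) = dCn t x.val y.val := by
  obtain ⟨W, hW⟩ := exists_walk_dCn h3 _ x y rfl
  have hle : (rootedProd G (cycleGraph t) (zeroF h3)).dist (a, x) (a, y) ≤
      dCn t x.val y.val := by
    have := SimpleGraph.dist_le (W.map (copyHom (G := G) h3 a))
    rwa [Walk.length_map, hW] at this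
  refine le_antisymm hle ?_
  obtain ⟨P, hP⟩ := Reachable.exists_walk_length_eq_dist ⟨W.map (copyHom (G := G) h3 a)⟩
  obtain ⟨W', hW'⟩ := proj2 h3 P
  calc dCn t x.val y.val ≤ W'.length := dCn_le_walk h3 W'
    _ ≤ P.length := hW'
    _ = _ := hP

lemma rp_cross_lb (h3 : 3 ≤ t) (hGc : G.Connected) {p q : α × Fin t}
    (W : (rootedProd G (cycleGraph t) (zeroF h3)).Walk p q) (hne : p.1 ≠ q.1) :
    dCn t p.2.val 0 + G.dist p.1 q.1 + dCn t 0 q.2.val ≤ W.length := by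
  induction W with
  | nil => exact absurd rfl hne
  | @cons p m q h W ih =>
    rcases id h with ⟨h1, h2⟩ | ⟨h1, h2, h3'⟩
    · have hmq : m.1 ≠ q.1 := by rw [← h1]; exact hne
      have hIH := ih hmq
      have hlip : dCn t p.2.val 0 ≤ dCn t m.2.val 0 + 1 := by
        have := dCn_lip (t := t) h3 (y := zeroF h3) h2
        simpa [zeroF] using this
      have hdd : G.dist p.1 q.1 = G.dist m.1 q.1 := by rw [h1]
      rw [Walk.length_cons]
      omega
    · have hp2 : p.2.val = 0 := by rw [h1]; rfl
      have hm2 : m.2.val = 0 := by rw [h2]; rfl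
      have hdz : dCn t p.2.val 0 = 0 := by rw [hp2]; unfold dCn; omega
      by_cases hmq : m.1 = q.1
      · have hd1 : G.dist p.1 q.1 = 1 := by
          rw [SimpleGraph.dist_eq_one_iff_adj]
          rw [← hmq]; exact h3'
        obtain ⟨W', hW'⟩ := proj2 h3 W
        have hcw : dCn t 0 q.2.val ≤ W'.length := by
          have := dCn_le_walk h3 W'
          rwa [hm2] at this
        rw [Walk.length_cons]
        omega
      · have hIH := ih hmq
        have hdz2 : dCn t m.2.val 0 = 0 := by rw [hm2]; unfold dCn; omega
        have htri : G.dist p.1 q.1 ≤ G.dist p.1 m.1 + G.dist m.1 q.1 :=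
          hGc.dist_triangle
        have hd1 : G.dist p.1 m.1 ≤ 1 := by
          simpa using SimpleGraph.dist_le (Walk.cons h3' Walk.nil)
        rw [Walk.length_cons]
        omega

lemma rp_dist_cross (h3 : 3 ≤ t) (hGc : G.Connected) {a b : α} (hab : a ≠ b)
    (x y : Fin t) :
    (rootedProd G (cycleGraph t) (zeroF h3)).dist (a, x) (b, y) =
      dCn t x.val 0 + G.dist a b + dCn t 0 y.val := by
  obtain ⟨W1, hW1⟩ := exists_walk_dCn h3 _ x (zeroF h3) rfl
  obtain ⟨W2, hW2⟩ := hGc.exists_walk_length_eq_dist a b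
  obtain ⟨W3, hW3⟩ := exists_walk_dCn h3 _ (zeroF h3) y rfl
  have hv : (zeroF h3 : Fin t).val = 0 := rfl
  set WW := (((W1.map (copyHom h3 a)).copy (copyHom_apply h3 a x)
      (copyHom_apply h3 a (zeroF h3))).append
      (((W2.map (rootHom h3)).copy (rootHom_apply h3 a) (rootHom_apply h3 b)).append
      ((W3.map (copyHom h3 b)).copy (copyHom_apply h3 b (zeroF h3)) (copyHom_apply h3 b y)))) with hWW
  have hlen : WW.length = dCn t x.val 0 + G.dist a b + dCn t 0 y.val := by
    rw [hWW, Walk.length_append, Walk.length_append, Walk.length_copy, Walk.length_copy,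
      Walk.length_copy, Walk.length_map, Walk.length_map, Walk.length_map]
    rw [hW1, hW2, hW3, hv]
    omega
  refine le_antisymm (by simpa [hlen] using SimpleGraph.dist_le WW) ?_
  obtain ⟨P, hP⟩ := Reachable.exists_walk_length_eq_dist ⟨WW⟩
  have := rp_cross_lb h3 hGc P (by simpa using hab)
  simpa [hP] using this

lemma rp_connected (h3 : 3 ≤ t) (hGc : G.Connected) [Nonempty α] :
    (rootedProd G (cycleGraph t) (zeroF h3)).Connected := by
  rw [SimpleGraph.connected_iff]
  refine ⟨?_, ⟨(Classical.arbitrary α, zeroF h3)⟩⟩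
  intro p q
  by_cases hpq : p.1 = q.1
  · obtain ⟨W, _⟩ := exists_walk_dCn h3 _ p.2 q.2 rfl
    have : (p.1, p.2) = p := rfl
    rcases p with ⟨a, x⟩; rcases q with ⟨b, y⟩
    cases hpq
    exact ⟨W.map (copyHom h3 a)⟩
  · obtain ⟨W1, _⟩ := exists_walk_dCn h3 _ p.2 (zeroF h3) rfl
    obtain ⟨W2, _⟩ := hGc.exists_walk_length_eq_dist p.1 q.1
    obtain ⟨W3, _⟩ := exists_walk_dCn h3 _ (zeroF h3) q.2 rfl
    rcases p with ⟨a, x⟩; rcases q with ⟨b, y⟩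
    exact ⟨(W1.map (copyHom h3 a)).append ((W2.map (rootHom h3)).append
      (W3.map (copyHom h3 b)))⟩


end Aux2


section Aux3

open SimpleGraph

variable {V W : Type*}

lemma stronglyResolves_self (G : SimpleGraph V) (u v : V) :
    StronglyResolves G u u v :=
  Or.inr (by rw [SimpleGraph.dist_self, Nat.zero_add])

lemma univ_isStrongGenerator (G : SimpleGraph V) [Fintype V] :
    IsStrongGenerator G ((Finset.univ : Finset V) : Set V) := by
  intro u v _
  exact ⟨u, by simp, stronglyResolves_self G u v⟩

lemma sdim_set_nonempty (G : SimpleGraph V) [Fintype V] :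
    {n | ∃ S : Finset V, S.card = n ∧ IsStrongGenerator G (S : Set V)}.Nonempty :=
  ⟨(Finset.univ : Finset V).card, Finset.univ, rfl, univ_isStrongGenerator G⟩

lemma exists_strong_basis (G : SimpleGraph V) [Fintype V] :
    ∃ S : Finset V, S.card = sdim G ∧ IsStrongGenerator G (S : Set V) :=
  Nat.sInf_mem (sdim_set_nonempty G)

lemma iso_dist_le {A : SimpleGraph V} {B : SimpleGraph W} (e : A ≃g B) (x y : V) :
    B.dist (e x) (e y) ≤ A.dist x y := by
  by_cases hr : A.Reachable x y
  · obtain ⟨P, hP⟩ := hr.exists_walk_length_eq_dist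
    have := SimpleGraph.dist_le (P.map e.toHom)
    rwa [Walk.length_map, hP] at this
  · rw [SimpleGraph.dist_eq_zero_of_not_reachable hr]
    rw [SimpleGraph.dist_eq_zero_of_not_reachable]
    intro ⟨P⟩
    exact hr ⟨(P.map e.symm.toHom).copy (by simp) (by simp)⟩

lemma iso_dist {A : SimpleGraph V} {B : SimpleGraph W} (e : A ≃g B) (x y : V) :
    B.dist (e x) (e y) = A.dist x y := by
  refine le_antisymm (iso_dist_le e x y) ?_
  have := iso_dist_le e.symm (e x) (e y)
  simpa using this

lemma sdim_iso_le {A : SimpleGraph V} {B : SimpleGraph W} [Fintype V] [Fintype W]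
    (e : A ≃g B) : sdim B ≤ sdim A := by
  classical
  obtain ⟨S, hcard, hgen⟩ := exists_strong_basis A
  have hmem : sdim A ∈
      {n | ∃ S : Finset W, S.card = n ∧ IsStrongGenerator B (S : Set W)} := by
    refine ⟨S.image e, ?_, ?_⟩
    · rw [Finset.card_image_of_injective _ e.injective, hcard]
    · intro u v huv
      obtain ⟨w, hwS, hres⟩ := hgen (e.symm u) (e.symm v)
        (fun h => huv (by simpa using congrArg e h))
      refine ⟨e w, Finset.mem_coe.mpr (Finset.mem_image_of_mem _ hwS), ?_⟩
      have hu : e (e.symm u) = u := by simp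
      have hv : e (e.symm v) = v := by simp
      rcases hres with h | h
      · left
        rw [← hu, ← hv, iso_dist e, iso_dist e, iso_dist e]
        exact h
      · right
        rw [← hu, ← hv, iso_dist e, iso_dist e, iso_dist e]
        exact h
  exact Nat.sInf_le hmem

lemma sdim_iso {A : SimpleGraph V} {B : SimpleGraph W} [Fintype V] [Fintype W]
    (e : A ≃g B) : sdim A = sdim B :=
  le_antisymm (sdim_iso_le e.symm) (sdim_iso_le e)

end Aux3

section Aux4

open SimpleGraph

variable {α : Type*} {t : ℕ} {G : SimpleGraph α}

def rotIso (h3 : 3 ≤ t) (v : Fin t) :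
    rootedProd G (cycleGraph t) v ≃g rootedProd G (cycleGraph t) (zeroF h3) := by
  haveI : NeZero t := ⟨by omega⟩
  have hz : (zeroF h3 : Fin t) = 0 := rfl
  exact {
    toEquiv := Equiv.prodCongr (Equiv.refl α) (Equiv.subRight v)
    map_rel_iff' := by
      intro p q
      show (rootedProd G (cycleGraph t) (zeroF h3)).Adj (p.1, p.2 - v) (q.1, q.2 - v) ↔ _
      unfold rootedProd
      simp only
      have hadj : (cycleGraph t).Adj (p.2 - v) (q.2 - v) ↔ (cycleGraph t).Adj p.2 q.2 := by
        rw [cycleGraph_adj', cycleGraph_adj', sub_sub_sub_cancel_right]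
        rw [sub_sub_sub_cancel_right]
      have hzz : ∀ x : Fin t, x - v = zeroF h3 ↔ x = v := by
        intro x; rw [hz, sub_eq_zero]
      rw [hadj, hzz, hzz]
  }

end Aux4


section Aux5

open SimpleGraph

variable {V : Type*}

lemma mmd_aux {A : SimpleGraph V} (hc : A.Connected) {u v w : V}
    (h : A.dist w u = A.dist w v + A.dist v u) (hwv : w ≠ v) (hne : u ≠ v)
    (hmd : MaxDistant A v u) : False := by
  obtain ⟨P, hP⟩ := hc.exists_walk_length_eq_dist v w
  cases P with
  | nil => exact hwv rfl
  | @cons _ z _ hadj P' =>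
    have h1 : A.dist z w ≤ P'.length := SimpleGraph.dist_le P'
    have h2 : P'.length + 1 = A.dist v w := by simpa using hP
    have h3 : A.dist u z ≤ A.dist v u := hmd z hadj
    have h4 : A.dist u w ≤ A.dist u z + A.dist z w := hc.dist_triangle
    have h5 : A.dist u w = A.dist w u := SimpleGraph.dist_comm
    have h6 : A.dist w v = A.dist v w := SimpleGraph.dist_comm
    have h7 : 0 < A.dist v u := hc.pos_dist_of_ne (Ne.symm hne)
    omega

lemma mmd_cover {A : SimpleGraph V} (hc : A.Connected) {S : Set V}
    (hgen : IsStrongGenerator A S) {u v : V} (hne : u ≠ v) (hm : MMD A u v) :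
    u ∈ S ∨ v ∈ S := by
  obtain ⟨w, hwS, hres⟩ := hgen u v hne
  by_cases hwu : w = u
  · exact Or.inl (hwu ▸ hwS)
  by_cases hwv : w = v
  · exact Or.inr (hwv ▸ hwS)
  exfalso
  rcases hres with h | h
  · exact mmd_aux hc h hwv hne hm.2
  · exact mmd_aux hc h hwu (Ne.symm hne) hm.1

end Aux5

section Aux6

open SimpleGraph

variable {α : Type*} {t K : ℕ} {G : SimpleGraph α}

lemma dCn_comm (a b : ℕ) : dCn t a b = dCn t b a := by unfold dCn; omega

lemma dCn_le_diam (hK : 2 * K = t ∨ 2 * K = t + 1) {a b : ℕ} (ha : a < t) (hb : b < t) :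
    dCn t a b ≤ t - K := by
  unfold dCn; omega

lemma mmd_same (h3 : 3 ≤ t) (hGc : G.Connected) (hK : 2 * K = t ∨ 2 * K = t + 1)
    {a : α} {x y : Fin t} (hx : x.val ≠ 0) (hy : y.val ≠ 0)
    (hd : dCn t x.val y.val = t - K) :
    MMD (rootedProd G (cycleGraph t) (zeroF h3)) (a, x) (a, y) := by
  have main : ∀ x y : Fin t, x.val ≠ 0 → dCn t x.val y.val = t - K →
      MaxDistant (rootedProd G (cycleGraph t) (zeroF h3)) (a, x) (a, y) := by
    intro x y hx hd w hw
    obtain ⟨w1, w2⟩ := w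
    rcases hw with ⟨h1, h2⟩ | ⟨h1, h2, _⟩
    · dsimp at h1 h2
      subst h1
      rw [rp_dist_same h3, rp_dist_same h3, hd]
      exact dCn_le_diam hK y.isLt w2.isLt
    · exact absurd (congrArg Fin.val h1) hx
  refine ⟨main x y hx hd, main y x hy ?_⟩
  rw [dCn_comm]; exact hd

lemma mmd_cross (h3 : 3 ≤ t) (hGc : G.Connected) (hK : 2 * K = t ∨ 2 * K = t + 1)
    {a b : α} (hab : a ≠ b) {x y : Fin t}
    (hx : dCn t x.val 0 = t - K) (hy : dCn t y.val 0 = t - K) :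
    MMD (rootedProd G (cycleGraph t) (zeroF h3)) (a, x) (b, y) := by
  have main : ∀ (a b : α), a ≠ b → ∀ x y : Fin t, dCn t x.val 0 = t - K →
      dCn t y.val 0 = t - K →
      MaxDistant (rootedProd G (cycleGraph t) (zeroF h3)) (a, x) (b, y) := by
    intro a b hab x y hx hy w hw
    have hx0 : x.val ≠ 0 := by
      intro h0
      rw [h0] at hx
      unfold dCn at hx
      omega
    obtain ⟨w1, w2⟩ := w
    rcases hw with ⟨h1, h2⟩ | ⟨h1, h2, _⟩
    · dsimp at h1 h2
      subst h1
      rw [rp_dist_cross h3 hGc (Ne.symm hab), rp_dist_cross h3 hGc hab]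
      have e1 : dCn t 0 w2.val ≤ t - K := by
        rw [dCn_comm]
        exact dCn_le_diam hK w2.isLt (by omega)
      have e2 : dCn t 0 y.val = dCn t y.val 0 := dCn_comm _ _
      have e3 : G.dist b a = G.dist a b := SimpleGraph.dist_comm
      omega
    · exact absurd (congrArg Fin.val h1) hx0
  refine ⟨main a b hab x y hx hy, main b a (Ne.symm hab) y x hy hx⟩

lemma pair_pick [DecidableEq α] {S : Finset (α × Fin t)} (a : α) (I : Finset ℕ)
    (f g : ℕ → Fin t)
    (hfg : ∀ i ∈ I, (a, f i) ∈ S ∨ (a, g i) ∈ S)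
    (hinj : ∀ i ∈ I, ∀ j ∈ I,
      (f i = f j ∨ f i = g j ∨ g i = f j ∨ g i = g j) → i = j) :
    I.card ≤ (S.filter (fun p => p.1 = a)).card := by
  classical
  set φ : ℕ → Fin t := fun i => if (a, f i) ∈ S then f i else g i with hφ
  refine Finset.card_le_card_of_injOn (fun i => (a, φ i)) ?_ ?_
  · intro i hi
    rw [Finset.mem_coe, Finset.mem_filter]
    refine ⟨?_, rfl⟩
    rw [hφ]
    dsimp only
    split_ifs with h
    · exact h
    · exact (hfg i hi).resolve_left h
  · intro i hi j hj hij
    have hphi : φ i = φ j := congrArg Prod.snd hij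
    apply hinj i hi j hj
    rw [hφ] at hphi
    dsimp only at hphi
    split_ifs at hphi <;> tauto

end Aux6


section Aux7

open SimpleGraph

variable {α : Type*} {t K : ℕ} {G : SimpleGraph α} [Fintype α]

lemma sdim_lower (h3 : 3 ≤ t) (hGc : G.Connected) (hK : 2 * K = t ∨ 2 * K = t + 1)
    (h2 : 2 ≤ Fintype.card α) {S : Finset (α × Fin t)}
    (hgen : IsStrongGenerator (rootedProd G (cycleGraph t) (zeroF h3))
      (S : Set (α × Fin t))) :
    Fintype.card α * K - 1 ≤ S.card := by
  classical
  haveI : Nonempty α := Fintype.card_pos_iff.mp (by omega)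
  have hKt : 2 ≤ K := by omega
  have hconn := rp_connected (G := G) h3 hGc
  have hcov : ∀ u v : α × Fin t, u ≠ v →
      MMD (rootedProd G (cycleGraph t) (zeroF h3)) u v → u ∈ S ∨ v ∈ S := by
    intro u v hne hm
    have := mmd_cover hconn hgen hne hm
    simpa using this
  have hmlt : ∀ i : ℕ, i % t < t := fun i => Nat.mod_lt _ (by omega)
  -- baseline bound : every copy contains at least K - 1 elements of S
  have baseline : ∀ a : α, K - 1 ≤ (S.filter (fun p => p.1 = a)).card := by
    intro a
    have hpp := pair_pick (S := S) a (Finset.Icc 1 (K - 1))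
      (fun i => ⟨i % t, hmlt i⟩) (fun i => ⟨(i + (t - K)) % t, hmlt _⟩) ?_ ?_
    · have hic : (Finset.Icc 1 (K - 1)).card = K - 1 := by rw [Nat.card_Icc]; omega
      omega
    · intro i hi
      rw [Finset.mem_Icc] at hi
      have e1 : i % t = i := Nat.mod_eq_of_lt (by omega)
      have e2 : (i + (t - K)) % t = i + (t - K) := Nat.mod_eq_of_lt (by omega)
      refine hcov _ _ ?_ (mmd_same h3 hGc hK ?_ ?_ ?_)
      · intro hcon
        have := congrArg (fun p => (Prod.snd p).val) hcon
        dsimp at this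
        omega
      · dsimp; omega
      · dsimp; omega
      · dsimp
        rw [e1, e2]
        unfold dCn
        omega
    · intro i hi j hj hc
      rw [Finset.mem_Icc] at hi hj
      have e1 : i % t = i := Nat.mod_eq_of_lt (by omega)
      have e2 : (i + (t - K)) % t = i + (t - K) := Nat.mod_eq_of_lt (by omega)
      have e3 : j % t = j := Nat.mod_eq_of_lt (by omega)
      have e4 : (j + (t - K)) % t = j + (t - K) := Nat.mod_eq_of_lt (by omega)
      rcases hc with h | h | h | h <;>
        (have hv := congrArg Fin.val h; dsimp at hv;
         simp only [e1, e2, e3, e4] at hv; omega)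
  -- far set
  set Ffin : Finset (Fin t) := Finset.Icc ⟨t - K, by omega⟩ ⟨K, by omega⟩ with hFf
  have hFmem : ∀ x : Fin t, x ∈ Ffin ↔ (t - K ≤ x.val ∧ x.val ≤ K) := by
    intro x
    rw [hFf, Finset.mem_Icc, Fin.le_def, Fin.le_def]
  have hFcard : Ffin.card = 2 * K + 1 - t := by
    rw [hFf, Fin.card_Icc]
    dsimp
    omega
  have hFfar : ∀ x : Fin t, x ∈ Ffin → dCn t x.val 0 = t - K := by
    intro x hx
    rw [hFmem] at hx
    unfold dCn
    omega
  -- good copies contain at least K elements of S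
  have good : ∀ a : α, (∀ x ∈ Ffin, (a, x) ∈ S) →
      K ≤ (S.filter (fun p => p.1 = a)).card := by
    intro a hFS
    set φ : ℕ → Fin t := fun i =>
      if (a, (⟨i % t, hmlt i⟩ : Fin t)) ∈ S then ⟨i % t, hmlt i⟩
      else ⟨(i + K) % t, hmlt _⟩ with hφ
    have hφS : ∀ i ∈ Finset.Icc 1 (t - K - 1), (a, φ i) ∈ S ∧
        (φ i).val = i ∨ (a, φ i) ∈ S ∧ (φ i).val = i + K := by
      intro i hi
      rw [Finset.mem_Icc] at hi
      have e1 : i % t = i := Nat.mod_eq_of_lt (by omega)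
      have e2 : (i + K) % t = i + K := Nat.mod_eq_of_lt (by omega)
      have hmm : (a, (⟨i % t, hmlt i⟩ : Fin t)) ∈ S ∨
          (a, (⟨(i + K) % t, hmlt _⟩ : Fin t)) ∈ S := by
        refine hcov _ _ ?_ (mmd_same h3 hGc hK ?_ ?_ ?_)
        · intro hcon
          have := congrArg (fun p => (Prod.snd p).val) hcon
          dsimp at this
          omega
        · dsimp; omega
        · dsimp; omega
        · dsimp
          rw [e1, e2]
          unfold dCn
          omega
      rw [hφ]
      dsimp only
      split_ifs with h
      · exact Or.inl ⟨h, by dsimp; omega⟩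
      · exact Or.inr ⟨hmm.resolve_left h, by dsimp; omega⟩
    set U1 : Finset (α × Fin t) := Ffin.image (fun x => (a, x)) with hU1
    set U2 : Finset (α × Fin t) :=
      (Finset.Icc 1 (t - K - 1)).image (fun i => (a, φ i)) with hU2
    have hU1card : U1.card = 2 * K + 1 - t := by
      rw [hU1, Finset.card_image_of_injective _ (fun x y h => (Prod.mk.injEq _ _ _ _ ▸ h).2)]
      exact hFcard
    have hU2card : U2.card = t - K - 1 := by
      rw [hU2, Finset.card_image_of_injOn, Nat.card_Icc]
      · omega
      · intro i hi j hj hij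
        simp only [Finset.mem_coe, Finset.mem_Icc] at hi hj
        rcases hφS i (Finset.mem_Icc.mpr hi) with ⟨_, hv⟩ | ⟨_, hv⟩ <;>
          rcases hφS j (Finset.mem_Icc.mpr hj) with ⟨_, hw⟩ | ⟨_, hw⟩ <;>
          (have := congrArg (fun p => (Prod.snd p).val) hij;
           dsimp at this;
           omega)
    have hdisj : Disjoint U1 U2 := by
      rw [Finset.disjoint_left]
      intro p hp1 hp2
      rw [hU1, Finset.mem_image] at hp1
      rw [hU2, Finset.mem_image] at hp2
      obtain ⟨x, hxF, hx⟩ := hp1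
      obtain ⟨i, hiI, hi⟩ := hp2
      rw [hFmem] at hxF
      have hvv : x.val = (φ i).val := by
        have := congrArg (fun p => (Prod.snd p).val) (hx.trans hi.symm)
        dsimp at this
        omega
      rcases hφS i hiI with ⟨_, hv⟩ | ⟨_, hv⟩ <;>
        (rw [Finset.mem_Icc] at hiI; omega)
    have hsub : U1 ∪ U2 ⊆ S.filter (fun p => p.1 = a) := by
      intro p hp
      rw [Finset.mem_union] at hp
      rw [Finset.mem_filter]
      rcases hp with hp | hp
      · rw [hU1, Finset.mem_image] at hp
        obtain ⟨x, hxF, hx⟩ := hp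
        exact ⟨hx ▸ hFS x hxF, by rw [← hx]⟩
      · rw [hU2, Finset.mem_image] at hp
        obtain ⟨i, hiI, hi⟩ := hp
        rcases hφS i hiI with ⟨hS, _⟩ | ⟨hS, _⟩ <;> exact ⟨hi ▸ hS, by rw [← hi]⟩
    calc K = (2 * K + 1 - t) + (t - K - 1) := by omega
      _ = (U1 ∪ U2).card := by rw [Finset.card_union_of_disjoint hdisj, hU1card, hU2card]
      _ ≤ _ := Finset.card_le_card hsub
  have hsum : S.card = ∑ a ∈ Finset.univ, (S.filter fun p => p.1 = a).card :=
    Finset.card_eq_sum_card_fiberwise (fun x _ => Finset.mem_univ _)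
  by_cases hall : ∀ a : α, ∀ x ∈ Ffin, (a, x) ∈ S
  · have hbig : ∀ a ∈ (Finset.univ : Finset α), K ≤ (S.filter fun p => p.1 = a).card :=
      fun a _ => good a (hall a)
    have hns := Finset.card_nsmul_le_sum Finset.univ _ K hbig
    rw [smul_eq_mul, Finset.card_univ] at hns
    try dsimp only at hns
    omega
  · push_neg at hall
    obtain ⟨a0, x0, hx0F, hx0S⟩ := hall
    have hgood : ∀ a ∈ (Finset.univ.erase a0), K ≤ (S.filter fun p => p.1 = a).card := by
      intro a ha
      rw [Finset.mem_erase] at ha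
      refine good a ?_
      intro x hxF
      have := hcov (a, x) (a0, x0) ?_ (mmd_cross h3 hGc hK ha.1 (hFfar x hxF) (hFfar x0 hx0F))
      · exact this.resolve_right hx0S
      · intro hcon
        exact ha.1 (congrArg Prod.fst hcon)
    have hrest := Finset.card_nsmul_le_sum (Finset.univ.erase a0) _ K hgood
    rw [smul_eq_mul, Finset.card_erase_of_mem (Finset.mem_univ _), Finset.card_univ] at hrest
    have hsplit := Finset.add_sum_erase Finset.univ
      (fun a => (S.filter fun p => p.1 = a).card) (Finset.mem_univ a0)
    try dsimp only at hrest
    try dsimp only at hsplit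
    have hb0 := baseline a0
    obtain ⟨m, hm⟩ : ∃ m, Fintype.card α = m + 1 :=
      ⟨Fintype.card α - 1, by omega⟩
    have hmul : (Fintype.card α - 1) * K + K = Fintype.card α * K := by
      rw [hm]
      simp [Nat.succ_mul]
    omega

end Aux7


section Aux8

open SimpleGraph

variable {α : Type*} {t K : ℕ} {G : SimpleGraph α} [Fintype α]

lemma dCn_shift (h3 : 3 ≤ t) {a b : ℕ} (ha : a < t) (hb : b < t) :
    dCn t ((a + 1) % t) ((b + 1) % t) = dCn t a b := by
  by_cases h1 : a + 1 = t <;> by_cases h2 : b + 1 = t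
  · rw [h1, h2, Nat.mod_self]
    unfold dCn; omega
  · rw [h1, Nat.mod_self, Nat.mod_eq_of_lt (by omega)]
    unfold dCn; omega
  · rw [h2, Nat.mod_self, Nat.mod_eq_of_lt (by omega)]
    unfold dCn; omega
  · rw [Nat.mod_eq_of_lt (by omega), Nat.mod_eq_of_lt (by omega)]
    unfold dCn; omega

lemma mod_pred_val (h3 : 3 ≤ t) {a : ℕ} (ha : a < t) :
    (a + (t - 1)) % t = if a = 0 then t - 1 else a - 1 := by
  split_ifs with h
  · rw [h, Nat.zero_add, Nat.mod_eq_of_lt (by omega)]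
  · have h1 : a + (t - 1) = (a - 1) + t := by omega
    rw [h1, Nat.add_mod_right, Nat.mod_eq_of_lt (by omega)]

lemma mod_pred_succ (h3 : 3 ≤ t) {a : ℕ} (ha : a < t) :
    ((a + (t - 1)) % t + 1) % t = a := by
  rw [mod_pred_val h3 ha]
  split_ifs with h
  · have h1 : t - 1 + 1 = t := by omega
    rw [h1, Nat.mod_self, h]
  · rw [Nat.mod_eq_of_lt (by omega)]
    omega

lemma window_resolve (h3 : 3 ≤ t) (hK : 2 * K = t ∨ 2 * K = t + 1) {x y : Fin t}
    (hxy : x ≠ y) :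
    ∃ z : Fin t, t - K ≤ z.val ∧
      (dCn t z.val x.val = dCn t z.val y.val + dCn t y.val x.val ∨
       dCn t z.val y.val = dCn t z.val x.val + dCn t x.val y.val) := by
  have hx := x.isLt; have hy := y.isLt
  have hne : x.val ≠ y.val := fun h => hxy (Fin.ext h)
  by_cases h1 : t - K ≤ x.val
  · exact ⟨x, h1, Or.inr (by unfold dCn; omega)⟩
  by_cases h2 : t - K ≤ y.val
  · exact ⟨y, h2, Or.inl (by unfold dCn; omega)⟩
  refine ⟨⟨t - K, by omega⟩, le_refl _, ?_⟩
  rcases Nat.lt_or_ge x.val y.val with h | h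
  · left; dsimp; unfold dCn; omega
  · right; dsimp; unfold dCn; omega

lemma window_rot_resolve (h3 : 3 ≤ t) (hK : 2 * K = t ∨ 2 * K = t + 1) {x y : Fin t}
    (hxy : x ≠ y) :
    ∃ z : Fin t, (t - K + 1 ≤ z.val ∨ z.val = 0) ∧
      (dCn t z.val x.val = dCn t z.val y.val + dCn t y.val x.val ∨
       dCn t z.val y.val = dCn t z.val x.val + dCn t x.val y.val) := by
  have hx := x.isLt; have hy := y.isLt
  have hmlt : ∀ i : ℕ, i % t < t := fun i => Nat.mod_lt _ (by omega)
  set px : Fin t := ⟨(x.val + (t - 1)) % t, hmlt _⟩ with hpx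
  set py : Fin t := ⟨(y.val + (t - 1)) % t, hmlt _⟩ with hpy
  have hpxy : px ≠ py := by
    intro h
    have hv := congrArg Fin.val h
    rw [hpx, hpy] at hv
    dsimp at hv
    rw [mod_pred_val h3 hx, mod_pred_val h3 hy] at hv
    have : x.val ≠ y.val := fun h => hxy (Fin.ext h)
    split_ifs at hv <;> omega
  obtain ⟨z, hzW, hzR⟩ := window_resolve h3 hK hpxy
  have hz := z.isLt
  refine ⟨⟨(z.val + 1) % t, hmlt _⟩, ?_, ?_⟩
  · dsimp
    by_cases h : z.val + 1 = t
    · rw [h, Nat.mod_self]; right; rfl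
    · rw [Nat.mod_eq_of_lt (by omega)]; left; omega
  · have e1 : dCn t ((z.val + 1) % t) x.val = dCn t z.val px.val := by
      conv_lhs => rw [← mod_pred_succ h3 hx]
      exact dCn_shift h3 hz (hmlt _)
    have e2 : dCn t ((z.val + 1) % t) y.val = dCn t z.val py.val := by
      conv_lhs => rw [← mod_pred_succ h3 hy]
      exact dCn_shift h3 hz (hmlt _)
    have e3 : dCn t x.val y.val = dCn t px.val py.val := by
      conv_lhs => rw [← mod_pred_succ h3 hx, ← mod_pred_succ h3 hy]
      exact dCn_shift h3 (hmlt _) (hmlt _)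
    have e4 : dCn t y.val x.val = dCn t py.val px.val := by
      conv_lhs => rw [← mod_pred_succ h3 hy, ← mod_pred_succ h3 hx]
      exact dCn_shift h3 (hmlt _) (hmlt _)
    dsimp
    rw [e1, e2, e3, e4]
    exact hzR

lemma window_cover (h3 : 3 ≤ t) (hK : 2 * K = t ∨ 2 * K = t + 1) (x : Fin t) :
    ∃ z : Fin t, t - K ≤ z.val ∧
      dCn t z.val 0 = dCn t z.val x.val + dCn t x.val 0 := by
  have hx := x.isLt
  by_cases h1 : t - K ≤ x.val
  · exact ⟨x, h1, by unfold dCn; omega⟩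
  · exact ⟨⟨t - K, by omega⟩, le_refl _, by dsimp; unfold dCn; omega⟩

lemma sdim_upper (h3 : 3 ≤ t) (hGc : G.Connected) (hK : 2 * K = t ∨ 2 * K = t + 1)
    (h2 : 2 ≤ Fintype.card α) :
    ∃ S : Finset (α × Fin t), S.card = Fintype.card α * K - 1 ∧
      IsStrongGenerator (rootedProd G (cycleGraph t) (zeroF h3))
        (S : Set (α × Fin t)) := by
  classical
  haveI : Nonempty α := Fintype.card_pos_iff.mp (by omega)
  have hKt : 2 ≤ K := by omega
  have hKlt : K ≤ t - 1 := by omega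
  set a0 : α := Classical.arbitrary α with ha0
  set Wfin : Finset (Fin t) := Finset.Icc ⟨t - K, by omega⟩ ⟨t - 1, by omega⟩ with hWf
  have hWmem : ∀ x : Fin t, x ∈ Wfin ↔ t - K ≤ x.val := by
    intro x
    rw [hWf, Finset.mem_Icc, Fin.le_def, Fin.le_def]
    have := x.isLt
    dsimp
    omega
  have hWcard : Wfin.card = K := by
    rw [hWf, Fin.card_Icc]
    dsimp
    omega
  set e0 : α × Fin t := (a0, ⟨t - K, by omega⟩) with he0
  set S : Finset (α × Fin t) := (Finset.univ ×ˢ Wfin).erase e0 with hS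
  have hSmem : ∀ p : α × Fin t, p ∈ S ↔ (t - K ≤ p.2.val ∧ p ≠ e0) := by
    intro p
    rw [hS, Finset.mem_erase, Finset.mem_product, hWmem]
    constructor
    · rintro ⟨h1, _, h2⟩; exact ⟨h2, h1⟩
    · rintro ⟨h1, h2⟩; exact ⟨h2, Finset.mem_univ _, h1⟩
  refine ⟨S, ?_, ?_⟩
  · rw [hS, Finset.card_erase_of_mem, Finset.card_product, Finset.card_univ, hWcard]
    rw [he0, Finset.mem_product]
    refine ⟨Finset.mem_univ _, ?_⟩
    rw [hWmem]
  · rintro ⟨a, x⟩ ⟨b, y⟩ huv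
    by_cases hab : a = b
    · subst hab
      have hxy : x ≠ y := fun h => huv (by rw [h])
      obtain ⟨z, hzw, hzR⟩ := window_rot_resolve h3 hK hxy
      rcases hzw with hz1 | hz0
      · refine ⟨(a, z), ?_, ?_⟩
        · rw [Finset.mem_coe, hSmem]
          refine ⟨by show t - K ≤ z.val; omega, ?_⟩
          intro hcon
          rw [he0, Prod.ext_iff] at hcon
          obtain ⟨hc1, hc2⟩ := hcon
          simp only [Fin.ext_iff] at hc2
          try dsimp at hc2
          omega
        · unfold StronglyResolves
          rw [rp_dist_same h3, rp_dist_same h3, rp_dist_same h3, rp_dist_same h3]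
          exact hzR
      · obtain ⟨c, hc⟩ := Fintype.exists_ne_of_one_lt_card (by omega) a
        refine ⟨(c, ⟨t - 1, by omega⟩), ?_, ?_⟩
        · rw [Finset.mem_coe, hSmem]
          refine ⟨by show t - K ≤ t - 1; omega, ?_⟩
          intro hcon
          rw [he0, Prod.ext_iff] at hcon
          obtain ⟨hc1, hc2⟩ := hcon
          simp only [Fin.ext_iff] at hc2
          try dsimp at hc2
          omega
        · unfold StronglyResolves
          rw [rp_dist_cross h3 hGc hc, rp_dist_cross h3 hGc hc, rp_dist_same h3,
            rp_dist_same h3]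
          rw [hz0] at hzR
          have hv0 : (zeroF h3 : Fin t).val = 0 := rfl
          rcases hzR with h | h
          · left; omega
          · right; omega
    · by_cases ha0' : a = a0
      · have hb0 : b ≠ a0 := fun h => hab (by rw [ha0', h])
        obtain ⟨z, hzW, hzC⟩ := window_cover h3 hK y
        refine ⟨(b, z), ?_, ?_⟩
        · rw [Finset.mem_coe, hSmem]
          refine ⟨hzW, ?_⟩
          intro hcon
          rw [he0, Prod.ext_iff] at hcon
          exact hb0 hcon.1
        · unfold StronglyResolves
          left
          rw [rp_dist_cross h3 hGc (Ne.symm hab), rp_dist_same h3,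
            rp_dist_cross h3 hGc (Ne.symm hab)]
          have hcm : dCn t 0 y.val = dCn t y.val 0 := dCn_comm _ _
          omega
      · obtain ⟨z, hzW, hzC⟩ := window_cover h3 hK x
        refine ⟨(a, z), ?_, ?_⟩
        · rw [Finset.mem_coe, hSmem]
          refine ⟨hzW, ?_⟩
          intro hcon
          rw [he0, Prod.ext_iff] at hcon
          exact ha0' hcon.1
        · unfold StronglyResolves
          right
          rw [rp_dist_cross h3 hGc hab, rp_dist_same h3, rp_dist_cross h3 hGc hab]
          omega

end Aux8

theorem statement10 {α : Type*} [Fintype α] (G : SimpleGraph α) (hG : G.Connected)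
    {r t : ℕ} (hr : Fintype.card α = r) (h2 : 2 ≤ r) (h3 : 3 ≤ t) (v : Fin t) :
    (sdim (rootedProd G (SimpleGraph.cycleGraph t) v) : ℤ) = r * (((t + 1) / 2 : ℕ) : ℤ) - 1 := by
  classical
  subst hr
  set K : ℕ := (t + 1) / 2 with hKdef
  have hK : 2 * K = t ∨ 2 * K = t + 1 := by omega
  have hKt : 2 ≤ K := by omega
  haveI : Nonempty α := Fintype.card_pos_iff.mp (by omega)
  have hiso := sdim_iso (rotIso (G := G) h3 v)
  obtain ⟨S, hScard, hSgen⟩ := sdim_upper h3 hG hK h2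
  have hle : sdim (rootedProd G (SimpleGraph.cycleGraph t) (zeroF h3)) ≤
      Fintype.card α * K - 1 := Nat.sInf_le ⟨S, hScard, hSgen⟩
  have hge : Fintype.card α * K - 1 ≤
      sdim (rootedProd G (SimpleGraph.cycleGraph t) (zeroF h3)) := by
    refine le_csInf (sdim_set_nonempty _) ?_
    rintro n ⟨S', hc, hg⟩
    exact hc ▸ sdim_lower h3 hG hK h2 hg
  have heq : sdim (rootedProd G (SimpleGraph.cycleGraph t) v) =
      Fintype.card α * K - 1 := by
    rw [hiso]
    omega
  rw [heq]
  have h4 : 4 ≤ Fintype.card α * K := Nat.mul_le_mul h2 hKt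
  have h1 : 1 ≤ Fintype.card α * K := by omega
  rw [Nat.cast_sub h1]
  push_cast
  ring

end RootedStrong
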